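/- Let c > 0, let f be a continuous probability density on [0,c] with monotone hazard rate, and let l ∈ [0,1). Extend g_f(·,l) to x = 0 by g_f(0,l) = 0. Then every x* ∈ [0,1] satisfying g_f(x*,l) ≥ g_f(x,l) for all x ∈ [0,1] must satisfy x* > l; in particular, g_f(·,l) is strictly increasing on [0,l]. -/

import Mathlib

open MeasureTheory Set

/-- Expected revenue `g_f(x,l)` of the two-bidder click-through auction with CTR pair
`(1,l)`, i.i.d. values with density `f` on `[0,c]`, and signal ratio `s₂/s₁ = x`.
(Note that `gRev c f 0 l = 0`, which is the extension to `x = 0` by the value `0`.) -/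
noncomputable def gRev (c : ℝ) (f : ℝ → ℝ) (x l : ℝ) : ℝ :=
  (∫ v in (0 : ℝ)..c, v * x * (∫ u in (v * x)..c, f u) * f v)
  + l * ∫ v in (0 : ℝ)..(c * x), (v / x) * (∫ u in (v / x)..c, f u) * f v

noncomputable def Fc (f : ℝ → ℝ) (t : ℝ) : ℝ := ∫ u in (0:ℝ)..t, f u
noncomputable def Sc (c : ℝ) (f : ℝ → ℝ) (t : ℝ) : ℝ := ∫ u in t..c, f u

variable {c : ℝ} {f : ℝ → ℝ}

lemma hasDerivAt_Fc (hf : Continuous f) (t : ℝ) : HasDerivAt (Fc f) (f t) t :=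
  intervalIntegral.integral_hasDerivAt_right (hf.intervalIntegrable _ _)
    (hf.stronglyMeasurable.stronglyMeasurableAtFilter) hf.continuousAt

lemma Sc_eq (hf : Continuous f) (t : ℝ) : Sc c f t = (∫ u in (0:ℝ)..c, f u) - Fc f t :=
  (intervalIntegral.integral_interval_sub_left (μ := volume) (a := (0:ℝ)) (b := c) (c := t)
    (hf.intervalIntegrable _ _) (hf.intervalIntegrable _ _)).symm

lemma hasDerivAt_Sc (hf : Continuous f) (t : ℝ) : HasDerivAt (Sc c f) (-f t) t := by
  have h : Sc c f = fun t => (∫ u in (0:ℝ)..c, f u) - Fc f t := funext (Sc_eq hf)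
  rw [h]
  simpa using (hasDerivAt_Fc hf t).const_sub _

lemma Sc_cont (hf : Continuous f) : Continuous (Sc c f) :=
  continuous_iff_continuousAt.2 fun t => (hasDerivAt_Sc hf t).continuousAt

lemma Fc_cont (hf : Continuous f) : Continuous (Fc f) :=
  continuous_iff_continuousAt.2 fun t => (hasDerivAt_Fc hf t).continuousAt

lemma Sc_nonneg (hf : ∀ v, 0 ≤ f v) {t : ℝ} (ht : t ≤ c) : 0 ≤ Sc c f t :=
  intervalIntegral.integral_nonneg ht (fun u _ => hf u)

lemma Sc_anti (hfc : Continuous f) (hf : ∀ v, 0 ≤ f v) {a b : ℝ} (hab : a ≤ b) :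
    Sc c f b ≤ Sc c f a := by
  have h : Sc c f a - Sc c f b = ∫ u in a..b, f u := by
    rw [Sc, Sc]
    rw [← intervalIntegral.integral_add_adjacent_intervals (a := a) (b := b) (c := c)
      (hfc.intervalIntegrable _ _) (hfc.intervalIntegrable _ _)]
    ring
  have h2 : 0 ≤ ∫ u in a..b, f u := intervalIntegral.integral_nonneg hab (fun u _ => hf u)
  linarith

lemma Sc_self : Sc c f c = 0 := intervalIntegral.integral_same

lemma Fc_mono (hfc : Continuous f) (hf : ∀ v, 0 ≤ f v) {a b : ℝ} (hab : a ≤ b) :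
    Fc f a ≤ Fc f b := by
  have h : Fc f b - Fc f a = ∫ u in a..b, f u := by
    rw [Fc, Fc, ← intervalIntegral.integral_add_adjacent_intervals (a := (0:ℝ)) (b := a) (c := b)
      (hfc.intervalIntegrable _ _) (hfc.intervalIntegrable _ _)]
    ring
  have h2 : 0 ≤ ∫ u in a..b, f u := intervalIntegral.integral_nonneg hab (fun u _ => hf u)
  linarith

/-- Key MHR consequence: `S v * f w ≤ S w * f v` for `w ≤ v` in `[0,c]`. -/
lemma mhr_key (hfc : Continuous f) (hf : ∀ v, 0 ≤ f v)
    (hf_int : (∫ v in (0 : ℝ)..c, f v) = 1)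
    (hMHR : ∀ v₁ ∈ Set.Icc (0 : ℝ) c, ∀ v₂ ∈ Set.Icc (0 : ℝ) c, v₁ ≤ v₂ →
      (∫ u in (0 : ℝ)..v₁, f u) < 1 → (∫ u in (0 : ℝ)..v₂, f u) < 1 →
      f v₁ / (1 - ∫ u in (0 : ℝ)..v₁, f u) ≤ f v₂ / (1 - ∫ u in (0 : ℝ)..v₂, f u))
    {w v : ℝ} (hw : w ∈ Set.Icc 0 c) (hv : v ∈ Set.Icc 0 c) (hwv : w ≤ v) :
    Sc c f v * f w ≤ Sc c f w * f v := by
  have hSw : Sc c f w = 1 - Fc f w := by rw [Sc_eq hfc, hf_int]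
  have hSv : Sc c f v = 1 - Fc f v := by rw [Sc_eq hfc, hf_int]
  rcases eq_or_lt_of_le (Sc_nonneg hf hv.2) with h0 | hpos
  · calc Sc c f v * f w = 0 := by rw [← h0, zero_mul]
    _ ≤ Sc c f w * f v := mul_nonneg (Sc_nonneg hf hw.2) (hf v)
  · have hFv : Fc f v < 1 := by rw [hSv] at hpos; linarith
    have hFw : Fc f w < 1 := lt_of_le_of_lt (Fc_mono hfc hf hwv) hFv
    have h := hMHR w hw v hv hwv hFw hFv
    have hw' : (1 : ℝ) - ∫ u in (0:ℝ)..w, f u = 1 - Fc f w := rfl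
    have hv' : (1 : ℝ) - ∫ u in (0:ℝ)..v, f u = 1 - Fc f v := rfl
    rw [hw', hv', div_le_div_iff₀ (by linarith [Fc_mono hfc hf hwv, hSw, hSv, hpos, Sc_nonneg hf hw.2]) (by linarith)] at h
    · rw [hSw, hSv]; nlinarith [h]

/-- A continuous nonnegative function with positive value somewhere has positive integral. -/
lemma integral_pos_of_pos_at (hfc : Continuous f) {a b v₀ : ℝ} (hf : ∀ v ∈ Set.Icc a b, 0 ≤ f v)
    (hv₀ : v₀ ∈ Set.Ioo a b) (hfv₀ : 0 < f v₀) : 0 < ∫ v in a..b, f v := by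
  have hab : a ≤ b := le_of_lt (hv₀.1.trans hv₀.2)
  rw [intervalIntegral.integral_of_le hab]
  rw [setIntegral_pos_iff_support_of_nonneg_ae
    ((ae_restrict_iff' measurableSet_Ioc).2 (Filter.Eventually.of_forall
      fun v hv => hf v ⟨le_of_lt hv.1, hv.2⟩)) (hfc.intervalIntegrable a b).1]
  have hU : IsOpen (f ⁻¹' Set.Ioi 0) := isOpen_Ioi.preimage hfc
  obtain ⟨r, hr, hball⟩ := Metric.isOpen_iff.1 hU v₀ hfv₀
  set lo := max a (v₀ - r) with hlo
  set hi := min b (v₀ + r) with hhi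
  have h1 : lo < v₀ := max_lt hv₀.1 (by linarith)
  have h2 : v₀ < hi := lt_min hv₀.2 (by linarith)
  have hsub : Set.Ioo lo hi ⊆ Function.support f ∩ Set.Ioc a b := by
    intro y hy
    constructor
    · have : y ∈ Metric.ball v₀ r := by
        rw [Real.ball_eq_Ioo]
        exact ⟨lt_of_le_of_lt (le_max_right _ _) hy.1, lt_of_lt_of_le hy.2 (min_le_right _ _)⟩
      exact ne_of_gt (hball this)
    · exact ⟨lt_of_le_of_lt (le_max_left _ _) hy.1, le_of_lt (lt_of_lt_of_le hy.2 (min_le_left _ _))⟩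
  calc (0:ENNReal) < volume (Set.Ioo lo hi) := by
        rw [Real.volume_Ioo]; simp [ENNReal.ofReal_pos]; linarith
    _ ≤ volume (Function.support f ∩ Set.Ioc a b) := measure_mono hsub

lemma exists_pos_point (hc : 0 < c) (hfc : Continuous f) (hf : ∀ v, 0 ≤ f v)
    (hf_int : (∫ v in (0 : ℝ)..c, f v) = 1) : ∃ v₀ ∈ Set.Ioo 0 c, 0 < f v₀ := by
  by_contra h
  push_neg at h
  have hz : ∀ v ∈ Set.Ioo (0:ℝ) c, f v = 0 := fun v hv => le_antisymm (h v hv) (hf v)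
  have : (∫ v in (0:ℝ)..c, f v) = 0 := by
    rw [intervalIntegral.integral_of_le hc.le, MeasureTheory.integral_Ioc_eq_integral_Ioo,
      setIntegral_congr_fun measurableSet_Ioo hz]
    simp
  rw [hf_int] at this; norm_num at this

lemma J_pos (hc : 0 < c) (hfc : Continuous f) (hf : ∀ v, 0 ≤ f v)
    (hf_int : (∫ v in (0 : ℝ)..c, f v) = 1) :
    0 < ∫ v in (0:ℝ)..c, v * Sc c f v * f v := by
  obtain ⟨v₀, hv₀, hfv₀⟩ := exists_pos_point hc hfc hf hf_int
  -- find v₁ ∈ (v₀, c) with f v₁ > 0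
  have hU : IsOpen (f ⁻¹' Set.Ioi 0) := isOpen_Ioi.preimage hfc
  obtain ⟨r, hr, hball⟩ := Metric.isOpen_iff.1 hU v₀ hfv₀
  set v₁ := min (v₀ + r/2) ((v₀ + c)/2) with hv₁def
  have hv₁gt : v₀ < v₁ := lt_min (by linarith) (by linarith [hv₀.2])
  have hv₁lt : v₁ < c := lt_of_le_of_lt (min_le_right _ _) (by linarith [hv₀.2])
  have hfv₁ : 0 < f v₁ := by
    apply hball
    rw [Real.ball_eq_Ioo]
    exact ⟨by linarith, lt_of_le_of_lt (min_le_left _ _) (by linarith)⟩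
  have hSv₀ : 0 < Sc c f v₀ :=
    integral_pos_of_pos_at hfc (fun v _ => hf v) ⟨hv₁gt, hv₁lt⟩ hfv₁
  apply integral_pos_of_pos_at ((continuous_id.mul (Sc_cont hfc)).mul hfc)
    (fun v hv => mul_nonneg (mul_nonneg hv.1 (Sc_nonneg hf hv.2)) (hf v)) hv₀
  exact mul_pos (mul_pos hv₀.1 hSv₀) hfv₀

lemma T2_eq (hfc : Continuous f) {x : ℝ} (hx : 0 < x) :
    (∫ v in (0:ℝ)..(c*x), (v/x) * Sc c f (v/x) * f v)
      = ∫ t in (0:ℝ)..c, (t * f t - Sc c f t) * Fc f (x*t) := by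
  have hx' : x ≠ 0 := hx.ne'
  have h1 : (∫ t in (0:ℝ)..c, t * Sc c f t * f (x * t))
      = x⁻¹ * ∫ v in (0:ℝ)..(c*x), (v/x) * Sc c f (v/x) * f v := by
    have h := intervalIntegral.integral_comp_mul_left
      (fun v => (v/x) * Sc c f (v/x) * f v) hx' (a := 0) (b := c)
    rw [mul_zero, mul_comm x c, smul_eq_mul] at h
    rw [← h]
    apply intervalIntegral.integral_congr
    intro t _
    show t * Sc c f t * f (x * t) = (x*t/x) * Sc c f (x*t/x) * f (x*t)
    rw [mul_div_cancel_left₀ t hx']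
  have h2 : (∫ v in (0:ℝ)..(c*x), (v/x) * Sc c f (v/x) * f v)
      = x * ∫ t in (0:ℝ)..c, t * Sc c f t * f (x * t) := by
    rw [h1, ← mul_assoc, mul_inv_cancel₀ hx', one_mul]
  have hu : ∀ t ∈ Set.uIcc (0:ℝ) c, HasDerivAt (fun t => t * Sc c f t) (Sc c f t - t * f t) t := by
    intro t _
    have h := (hasDerivAt_id t).mul (hasDerivAt_Sc (c := c) hfc t)
    exact h.congr_deriv (by simp only [id]; ring)
  have hv : ∀ t ∈ Set.uIcc (0:ℝ) c, HasDerivAt (fun t => Fc f (x*t)) (x * f (x*t)) t := by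
    intro t _
    have h := (hasDerivAt_Fc hfc (x*t)).comp t ((hasDerivAt_id t).const_mul x)
    exact h.congr_deriv (by ring)
  have hu' : IntervalIntegrable (fun t => Sc c f t - t * f t) volume 0 c :=
    ((Sc_cont hfc).sub (continuous_id.mul hfc)).intervalIntegrable _ _
  have hv' : IntervalIntegrable (fun t => x * f (x*t)) volume 0 c :=
    (continuous_const.mul (hfc.comp (continuous_const.mul continuous_id))).intervalIntegrable _ _
  have hparts := intervalIntegral.integral_mul_deriv_eq_deriv_mul hu hv hu' hv'
  have h3 : x * ∫ t in (0:ℝ)..c, t * Sc c f t * f (x * t)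
      = ∫ t in (0:ℝ)..c, (t * Sc c f t) * (x * f (x*t)) := by
    rw [← intervalIntegral.integral_const_mul]
    apply intervalIntegral.integral_congr
    intro t _; show x * (t * Sc c f t * f (x*t)) = (t * Sc c f t) * (x * f (x*t)); ring
  have h4 : (∫ t in (0:ℝ)..c, (t * f t - Sc c f t) * Fc f (x*t))
      = - ∫ t in (0:ℝ)..c, (Sc c f t - t * f t) * Fc f (x*t) := by
    rw [← intervalIntegral.integral_neg]
    apply intervalIntegral.integral_congr
    intro t _; show (t * f t - Sc c f t) * Fc f (x*t) = -((Sc c f t - t * f t) * Fc f (x*t)); ring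
  rw [h2, h3, hparts, h4]
  have h5 : Sc c f c = 0 := Sc_self
  rw [h5]
  ring

lemma bound_exists (hc : 0 < c) (hfc : Continuous f) (hf : ∀ v, 0 ≤ f v) :
    ∃ K : ℝ, 0 ≤ K ∧ ∀ y ∈ Set.Icc (0:ℝ) c, f y ≤ K := by
  obtain ⟨K, hK⟩ := isCompact_Icc.exists_bound_of_continuousOn (hfc.continuousOn (s := Set.Icc 0 c))
  exact ⟨K, le_trans (norm_nonneg _) (hK 0 ⟨le_rfl, hc.le⟩),
    fun y hy => le_trans (le_abs_self _) (hK y hy)⟩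

lemma Sc_zero (hf_int : (∫ v in (0 : ℝ)..c, f v) = 1) : Sc c f 0 = 1 := hf_int

lemma Sc_le_one (hfc : Continuous f) (hf : ∀ v, 0 ≤ f v)
    (hf_int : (∫ v in (0 : ℝ)..c, f v) = 1) {t : ℝ} (ht : 0 ≤ t) : Sc c f t ≤ 1 := by
  rw [← Sc_zero (c := c) hf_int]; exact Sc_anti hfc hf ht

lemma ball_subset_Ioo {x₀ : ℝ} (hx₀ : x₀ ∈ Set.Ioo (0:ℝ) 1) :
    Metric.ball x₀ (min x₀ (1 - x₀)) ⊆ Set.Ioo 0 1 := by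
  intro y hy
  rw [Real.ball_eq_Ioo] at hy
  constructor
  · linarith [hy.1, min_le_left x₀ (1 - x₀)]
  · linarith [hy.2, min_le_right x₀ (1 - x₀)]

lemma hasDerivAt_G1 (hc : 0 < c) (hfc : Continuous f) (hf : ∀ v, 0 ≤ f v)
    (hf_int : (∫ v in (0 : ℝ)..c, f v) = 1) {x₀ : ℝ} (hx₀ : x₀ ∈ Set.Ioo (0:ℝ) 1) :
    HasDerivAt (fun x => ∫ v in (0:ℝ)..c, v * x * Sc c f (v*x) * f v)
      (∫ v in (0:ℝ)..c, (v * Sc c f (v*x₀) - v^2*x₀*f (v*x₀)) * f v) x₀ := by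
  obtain ⟨K, hK0, hK⟩ := bound_exists hc hfc hf
  have hε : (0:ℝ) < min x₀ (1 - x₀) := lt_min hx₀.1 (by linarith [hx₀.2])
  have hball := ball_subset_Ioo hx₀
  have hcontF : ∀ x : ℝ, Continuous (fun v => v * x * Sc c f (v*x) * f v) := fun x =>
    ((continuous_id.mul continuous_const).mul
      ((Sc_cont hfc).comp (continuous_id.mul continuous_const))).mul hfc
  have hcontF' : ∀ x : ℝ, Continuous (fun v => (v * Sc c f (v*x) - v^2*x*f (v*x)) * f v) :=
    fun x =>
    ((continuous_id.mul ((Sc_cont hfc).comp (continuous_id.mul continuous_const))).sub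
      (((continuous_pow 2).mul continuous_const).mul
        (hfc.comp (continuous_id.mul continuous_const)))).mul hfc
  have key := intervalIntegral.hasDerivAt_integral_of_dominated_loc_of_deriv_le
    (μ := volume) (F := fun x v => v * x * Sc c f (v*x) * f v)
    (F' := fun x v => (v * Sc c f (v*x) - v^2*x*f (v*x)) * f v)
    (a := 0) (b := c) (x₀ := x₀) (bound := fun _ => (c + c^2*K)*K) (Metric.ball_mem_nhds x₀ hε)
    (Filter.Eventually.of_forall fun x => (hcontF x).aestronglyMeasurable)
    ((hcontF x₀).intervalIntegrable _ _)
    (hcontF' x₀).aestronglyMeasurable ?_ intervalIntegrable_const ?_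
  · exact key.2
  · -- bound
    apply Filter.Eventually.of_forall
    intro v hv x hx
    rw [Set.uIoc_of_le hc.le] at hv
    have hxI : x ∈ Set.Ioo (0:ℝ) 1 := hball hx
    have hv0 : 0 < v := hv.1
    have hvc : v ≤ c := hv.2
    have hvx0 : 0 ≤ v * x := mul_nonneg hv0.le hxI.1.le
    have hvxc : v * x ≤ c := le_trans (by nlinarith [hxI.2] : v * x ≤ v) hvc
    have hS0 : 0 ≤ Sc c f (v*x) := Sc_nonneg hf hvxc
    have hS1 : Sc c f (v*x) ≤ 1 := Sc_le_one hfc hf hf_int hvx0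
    have hfvx : f (v*x) ≤ K := hK _ ⟨hvx0, hvxc⟩
    have hfv : f v ≤ K := hK _ ⟨hv0.le, hvc⟩
    have ha : 0 ≤ v * Sc c f (v*x) := mul_nonneg hv0.le hS0
    have ha' : v * Sc c f (v*x) ≤ c := le_trans (mul_le_of_le_one_right hv0.le hS1) hvc
    have hb : 0 ≤ v^2*x*f (v*x) := mul_nonneg (mul_nonneg (sq_nonneg v) hxI.1.le) (hf _)
    have hv2 : v^2 * x ≤ c^2 := by nlinarith [sq_nonneg v, hxI.2, hxI.1]
    have hb' : v^2*x*f (v*x) ≤ c^2*K :=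
      mul_le_mul hv2 hfvx (hf _) (by nlinarith [sq_nonneg c])
    rw [Real.norm_eq_abs, abs_mul, abs_of_nonneg (hf v)]
    have habs : |v * Sc c f (v*x) - v^2*x*f (v*x)| ≤ c + c^2*K :=
      abs_le.2 ⟨by linarith, by linarith⟩
    exact mul_le_mul habs hfv (hf v) (by nlinarith [sq_nonneg c])
  · -- differentiability
    apply Filter.Eventually.of_forall
    intro v _ x _
    have h1 : HasDerivAt (fun x : ℝ => v * x) v x := by
      simpa using (hasDerivAt_id x).const_mul v
    have h2 : HasDerivAt (fun x : ℝ => Sc c f (v*x)) (-f (v*x) * v) x :=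
      HasDerivAt.comp x (hasDerivAt_Sc (c := c) hfc (v*x)) h1
    have h3 := (h1.mul h2).mul_const (f v)
    exact h3.congr_deriv (by ring)

lemma Fc_zero : Fc f 0 = 0 := intervalIntegral.integral_same

lemma Fc_le_one (hfc : Continuous f) (hf : ∀ v, 0 ≤ f v)
    (hf_int : (∫ v in (0 : ℝ)..c, f v) = 1) {t : ℝ} (ht : t ≤ c) : Fc f t ≤ 1 := by
  have h := Sc_eq (c := c) hfc t
  rw [hf_int] at h
  have := Sc_nonneg (c := c) hf ht
  linarith

lemma Fc_nonneg (hfc : Continuous f) (hf : ∀ v, 0 ≤ f v) {t : ℝ} (ht : 0 ≤ t) :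
    0 ≤ Fc f t := by
  have h := Fc_mono hfc hf ht
  rwa [Fc_zero] at h

lemma hasDerivAt_G2 (hc : 0 < c) (hfc : Continuous f) (hf : ∀ v, 0 ≤ f v)
    (hf_int : (∫ v in (0 : ℝ)..c, f v) = 1) {x₀ : ℝ} (hx₀ : x₀ ∈ Set.Ioo (0:ℝ) 1) :
    HasDerivAt (fun x => ∫ t in (0:ℝ)..c, (t * f t - Sc c f t) * Fc f (x*t))
      (∫ t in (0:ℝ)..c, (t * f t - Sc c f t) * (t * f (t*x₀))) x₀ := by
  obtain ⟨K, hK0, hK⟩ := bound_exists hc hfc hf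
  have hε : (0:ℝ) < min x₀ (1 - x₀) := lt_min hx₀.1 (by linarith [hx₀.2])
  have hball := ball_subset_Ioo hx₀
  have hcontF : ∀ x : ℝ, Continuous (fun t => (t * f t - Sc c f t) * Fc f (x*t)) := fun x =>
    ((continuous_id.mul hfc).sub (Sc_cont hfc)).mul
      ((Fc_cont hfc).comp (continuous_const.mul continuous_id))
  have hcontF' : ∀ x : ℝ, Continuous (fun t => (t * f t - Sc c f t) * (t * f (t*x))) := fun x =>
    ((continuous_id.mul hfc).sub (Sc_cont hfc)).mul
      (continuous_id.mul (hfc.comp (continuous_id.mul continuous_const)))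
  have key := intervalIntegral.hasDerivAt_integral_of_dominated_loc_of_deriv_le
    (μ := volume) (F := fun x t => (t * f t - Sc c f t) * Fc f (x*t))
    (F' := fun x t => (t * f t - Sc c f t) * (t * f (t*x)))
    (a := 0) (b := c) (x₀ := x₀) (bound := fun _ => (c*K + 1)*(c*K)) (Metric.ball_mem_nhds x₀ hε)
    (Filter.Eventually.of_forall fun x => (hcontF x).aestronglyMeasurable)
    ((hcontF x₀).intervalIntegrable _ _)
    (hcontF' x₀).aestronglyMeasurable ?_ intervalIntegrable_const ?_
  · exact key.2
  · -- bound
    apply Filter.Eventually.of_forall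
    intro t ht x hx
    rw [Set.uIoc_of_le hc.le] at ht
    have hxI : x ∈ Set.Ioo (0:ℝ) 1 := hball hx
    have ht0 : 0 < t := ht.1
    have htc : t ≤ c := ht.2
    have htx0 : 0 ≤ t * x := mul_nonneg ht0.le hxI.1.le
    have htxc : t * x ≤ c := le_trans (by nlinarith [hxI.2] : t * x ≤ t) htc
    have hft : f t ≤ K := hK _ ⟨ht0.le, htc⟩
    have hftx : f (t*x) ≤ K := hK _ ⟨htx0, htxc⟩
    have hS0 : 0 ≤ Sc c f t := Sc_nonneg hf htc
    have hS1 : Sc c f t ≤ 1 := Sc_le_one hfc hf hf_int ht0.le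
    have ha : |t * f t - Sc c f t| ≤ c*K + 1 := by
      apply abs_le.2
      constructor
      · nlinarith [mul_nonneg ht0.le (hf t)]
      · nlinarith [mul_le_mul htc hft (hf t) hc.le]
    have hb : |t * f (t*x)| ≤ c*K := by
      rw [abs_of_nonneg (mul_nonneg ht0.le (hf _))]
      exact mul_le_mul htc hftx (hf _) hc.le
    rw [Real.norm_eq_abs, abs_mul]
    exact mul_le_mul ha hb (abs_nonneg _) (by nlinarith)
  · -- differentiability
    apply Filter.Eventually.of_forall
    intro t _ x _
    have h1 : HasDerivAt (fun x : ℝ => x * t) t x := by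
      simpa using (hasDerivAt_id x).mul_const t
    have h2 : HasDerivAt (fun x : ℝ => Fc f (x*t)) (f (x*t) * t) x :=
      HasDerivAt.comp (h := fun x : ℝ => x * t) x (hasDerivAt_Fc hfc (x*t)) h1
    have h3 := h2.const_mul (t * f t - Sc c f t)
    exact h3.congr_deriv (by rw [mul_comm x t]; ring)

lemma gRev_eq (hfc : Continuous f) (l : ℝ) {x : ℝ} (hx : 0 < x) :
    gRev c f x l = (∫ v in (0:ℝ)..c, v * x * Sc c f (v*x) * f v)
      + l * ∫ t in (0:ℝ)..c, (t * f t - Sc c f t) * Fc f (x*t) := by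
  rw [← T2_eq hfc hx]
  rfl

lemma hasDerivAt_gRev (hc : 0 < c) (hfc : Continuous f) (hf : ∀ v, 0 ≤ f v)
    (hf_int : (∫ v in (0 : ℝ)..c, f v) = 1) (l : ℝ) {x₀ : ℝ} (hx₀ : x₀ ∈ Set.Ioo (0:ℝ) 1) :
    HasDerivAt (fun x => gRev c f x l)
      (∫ v in (0:ℝ)..c, ((v * Sc c f (v*x₀) - v^2*x₀*f (v*x₀)) * f v
        + l * ((v * f v - Sc c f v) * (v * f (v*x₀))))) x₀ := by
  have h1 := hasDerivAt_G1 hc hfc hf hf_int hx₀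
  have h2 := (hasDerivAt_G2 hc hfc hf hf_int hx₀).const_mul l
  have h3 := h1.add h2
  have hi1 : IntervalIntegrable (fun v => (v * Sc c f (v*x₀) - v^2*x₀*f (v*x₀)) * f v)
      volume 0 c :=
    (((continuous_id.mul ((Sc_cont hfc).comp (continuous_id.mul continuous_const))).sub
      (((continuous_pow 2).mul continuous_const).mul
        (hfc.comp (continuous_id.mul continuous_const)))).mul hfc).intervalIntegrable _ _
  have hi2 : IntervalIntegrable (fun v => l * ((v * f v - Sc c f v) * (v * f (v*x₀))))
      volume 0 c :=
    (continuous_const.mul (((continuous_id.mul hfc).sub (Sc_cont hfc)).mul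
      (continuous_id.mul (hfc.comp (continuous_id.mul continuous_const))))).intervalIntegrable _ _
  have hce : (∫ v in (0:ℝ)..c, (v * Sc c f (v*x₀) - v^2*x₀*f (v*x₀)) * f v)
      + l * (∫ t in (0:ℝ)..c, (t * f t - Sc c f t) * (t * f (t*x₀)))
      = ∫ v in (0:ℝ)..c, ((v * Sc c f (v*x₀) - v^2*x₀*f (v*x₀)) * f v
        + l * ((v * f v - Sc c f v) * (v * f (v*x₀)))) := by
    rw [← intervalIntegral.integral_const_mul, ← intervalIntegral.integral_add hi1 hi2]
  rw [hce] at h3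
  apply h3.congr_of_eventuallyEq
  filter_upwards [isOpen_Ioo.mem_nhds hx₀] with x hx
  exact gRev_eq hfc l hx.1

lemma deriv_lower_bound (hc : 0 < c) (hfc : Continuous f) (hf : ∀ v, 0 ≤ f v)
    (hf_int : (∫ v in (0 : ℝ)..c, f v) = 1)
    (hMHR : ∀ v₁ ∈ Set.Icc (0 : ℝ) c, ∀ v₂ ∈ Set.Icc (0 : ℝ) c, v₁ ≤ v₂ →
      (∫ u in (0 : ℝ)..v₁, f u) < 1 → (∫ u in (0 : ℝ)..v₂, f u) < 1 →
      f v₁ / (1 - ∫ u in (0 : ℝ)..v₁, f u) ≤ f v₂ / (1 - ∫ u in (0 : ℝ)..v₂, f u))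
    {l x₀ : ℝ} (hl : l ∈ Set.Ico (0:ℝ) 1) (hx₀ : x₀ ∈ Set.Ioc 0 l) :
    (1 - l) * (∫ v in (0:ℝ)..c, v * Sc c f v * f v)
      ≤ ∫ v in (0:ℝ)..c, ((v * Sc c f (v*x₀) - v^2*x₀*f (v*x₀)) * f v
        + l * ((v * f v - Sc c f v) * (v * f (v*x₀)))) := by
  have hx₀1 : x₀ < 1 := lt_of_le_of_lt hx₀.2 hl.2
  rw [← intervalIntegral.integral_const_mul]
  apply intervalIntegral.integral_mono_on hc.le
  · exact (continuous_const.mul ((continuous_id.mul (Sc_cont hfc)).mul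
      hfc)).intervalIntegrable _ _
  · exact ((((continuous_id.mul ((Sc_cont hfc).comp (continuous_id.mul continuous_const))).sub
      (((continuous_pow 2).mul continuous_const).mul
        (hfc.comp (continuous_id.mul continuous_const)))).mul hfc).add
      (continuous_const.mul (((continuous_id.mul hfc).sub (Sc_cont hfc)).mul
        (continuous_id.mul (hfc.comp (continuous_id.mul continuous_const)))))).intervalIntegrable _ _
  · intro v hv
    have hw0 : 0 ≤ v * x₀ := mul_nonneg hv.1 hx₀.1.le
    have hwv : v * x₀ ≤ v := by nlinarith [hv.1, hx₀.1.le]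
    have hwc : v * x₀ ≤ c := le_trans hwv hv.2
    have k1 := mhr_key hfc hf hf_int hMHR ⟨hw0, hwc⟩ hv hwv
    have k2 : Sc c f v ≤ Sc c f (v*x₀) := Sc_anti hfc hf hwv
    have h1 : 0 ≤ l * (Sc c f (v*x₀) * f v - Sc c f v * f (v*x₀)) :=
      mul_nonneg hl.1 (by linarith)
    have h2 : 0 ≤ (1-l) * ((Sc c f (v*x₀) - Sc c f v) * f v) :=
      mul_nonneg (by linarith [hl.2]) (mul_nonneg (by linarith) (hf v))
    have h3 : 0 ≤ (l - x₀) * (v^2 * (f v * f (v*x₀))) :=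
      mul_nonneg (by linarith [hx₀.2]) (mul_nonneg (sq_nonneg v) (mul_nonneg (hf v) (hf _)))
    have h5 : 0 ≤ v * (l * (Sc c f (v*x₀) * f v - Sc c f v * f (v*x₀))
        + (1-l) * ((Sc c f (v*x₀) - Sc c f v) * f v)) :=
      mul_nonneg hv.1 (by linarith)
    nlinarith [h5, h3]

lemma gRev_zero (l : ℝ) : gRev c f 0 l = 0 := by
  simp [gRev]

lemma gRev_pos (hc : 0 < c) (hfc : Continuous f) (hf : ∀ v, 0 ≤ f v)
    (hf_int : (∫ v in (0 : ℝ)..c, f v) = 1) {l : ℝ} (hl0 : 0 ≤ l)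
    {x : ℝ} (hx : x ∈ Set.Ioc (0:ℝ) 1) : 0 < gRev c f x l := by
  have hJ := J_pos hc hfc hf hf_int
  have hA : x * (∫ v in (0:ℝ)..c, v * Sc c f v * f v)
      ≤ ∫ v in (0:ℝ)..c, v * x * Sc c f (v*x) * f v := by
    rw [← intervalIntegral.integral_const_mul]
    apply intervalIntegral.integral_mono_on hc.le
    · exact (continuous_const.mul ((continuous_id.mul (Sc_cont hfc)).mul
        hfc)).intervalIntegrable _ _
    · exact (((continuous_id.mul continuous_const).mul
        ((Sc_cont hfc).comp (continuous_id.mul continuous_const))).mul hfc).intervalIntegrable _ _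
    · intro v hv
      have hwv : v * x ≤ v := by nlinarith [hv.1, hx.2]
      have k2 : Sc c f v ≤ Sc c f (v*x) := Sc_anti hfc hf hwv
      have hS0 : 0 ≤ Sc c f v := Sc_nonneg hf hv.2
      have h := mul_nonneg (mul_nonneg hv.1 hx.1.le) (hf v)
      nlinarith [mul_nonneg (mul_nonneg (mul_nonneg hv.1 hx.1.le) (hf v)) (sub_nonneg.2 k2)]
  have hT2 : 0 ≤ ∫ v in (0:ℝ)..(c * x), (v / x) * Sc c f (v / x) * f v := by
    apply intervalIntegral.integral_nonneg (mul_nonneg hc.le hx.1.le)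
    intro v hv
    have hvx : v / x ≤ c := by
      rw [div_le_iff₀ hx.1]
      linarith [hv.2, mul_comm c x]
    exact mul_nonneg (mul_nonneg (div_nonneg hv.1 hx.1.le) (Sc_nonneg hf hvx)) (hf v)
  have hgr : gRev c f x l = (∫ v in (0:ℝ)..c, v * x * Sc c f (v*x) * f v)
      + l * ∫ v in (0:ℝ)..(c * x), (v / x) * Sc c f (v / x) * f v := rfl
  rw [hgr]
  have : 0 < x * ∫ v in (0:ℝ)..c, v * Sc c f v * f v := mul_pos hx.1 hJ
  nlinarith [mul_nonneg hl0 hT2]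

lemma main_aux (hc : 0 < c) (hfc : Continuous f) (hf : ∀ v, 0 ≤ f v)
    (hf_int : (∫ v in (0 : ℝ)..c, f v) = 1)
    (hMHR : ∀ v₁ ∈ Set.Icc (0 : ℝ) c, ∀ v₂ ∈ Set.Icc (0 : ℝ) c, v₁ ≤ v₂ →
      (∫ u in (0 : ℝ)..v₁, f u) < 1 → (∫ u in (0 : ℝ)..v₂, f u) < 1 →
      f v₁ / (1 - ∫ u in (0 : ℝ)..v₁, f u) ≤ f v₂ / (1 - ∫ u in (0 : ℝ)..v₂, f u))
    (l : ℝ) (hl : l ∈ Set.Ico (0 : ℝ) 1) :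
    (∀ xstar ∈ Set.Icc (0 : ℝ) 1,
        (∀ x ∈ Set.Icc (0 : ℝ) 1, gRev c f x l ≤ gRev c f xstar l) → l < xstar)
    ∧ StrictMonoOn (fun x => gRev c f x l) (Set.Icc 0 l) := by
  have hJ := J_pos hc hfc hf hf_int
  set D : ℝ → ℝ := fun x₀ => ∫ v in (0:ℝ)..c, ((v * Sc c f (v*x₀) - v^2*x₀*f (v*x₀)) * f v
        + l * ((v * f v - Sc c f v) * (v * f (v*x₀)))) with hD
  have hderiv : ∀ x₀ ∈ Set.Ioc (0:ℝ) l, HasDerivAt (fun x => gRev c f x l) (D x₀) x₀ :=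
    fun x₀ hx₀ => hasDerivAt_gRev hc hfc hf hf_int l ⟨hx₀.1, lt_of_le_of_lt hx₀.2 hl.2⟩
  have hDpos : ∀ x₀ ∈ Set.Ioc (0:ℝ) l, 0 < D x₀ := by
    intro x₀ hx₀
    have h := deriv_lower_bound hc hfc hf hf_int hMHR hl hx₀
    have : 0 < (1 - l) * ∫ v in (0:ℝ)..c, v * Sc c f v * f v :=
      mul_pos (by linarith [hl.2]) hJ
    linarith
  have hmono : StrictMonoOn (fun x => gRev c f x l) (Set.Icc 0 l) := by
    intro a ha b hb hab
    rcases eq_or_lt_of_le ha.1 with h0 | h0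
    · -- a = 0
      show gRev c f a l < gRev c f b l
      rw [← h0, gRev_zero]
      exact gRev_pos hc hfc hf hf_int hl.1 ⟨h0 ▸ hab, le_trans hb.2 hl.2.le⟩
    · -- 0 < a : use MVT on [a, b]
      have hsub : Set.Icc a b ⊆ Set.Ioc 0 l := fun y hy =>
        ⟨lt_of_lt_of_le h0 hy.1, le_trans hy.2 hb.2⟩
      have hmvt := strictMonoOn_of_deriv_pos (convex_Icc a b)
        (fun y hy => ((hderiv y (hsub hy)).continuousAt).continuousWithinAt)
        (fun y hy => by
          rw [interior_Icc] at hy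
          rw [(hderiv y (hsub ⟨hy.1.le, hy.2.le⟩)).deriv]
          exact hDpos y (hsub ⟨hy.1.le, hy.2.le⟩))
      exact hmvt ⟨le_rfl, hab.le⟩ ⟨hab.le, le_rfl⟩ hab
  refine ⟨?_, hmono⟩
  intro xstar hxs hmax
  by_contra hcon
  push_neg at hcon
  rcases eq_or_lt_of_le hcon with heq | hlt
  · -- xstar = l
    rcases eq_or_lt_of_le hl.1 with hl0 | hl0
    · -- l = 0 : gRev 1 > 0 = gRev 0
      have h1 := hmax 1 ⟨zero_le_one, le_rfl⟩
      have h2 : 0 < gRev c f 1 l := gRev_pos hc hfc hf hf_int hl.1 ⟨zero_lt_one, le_rfl⟩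
      have hx0 : xstar = 0 := heq.trans hl0.symm
      rw [hx0, gRev_zero] at h1
      linarith
    · -- l > 0 : positive derivative at l
      have hd := hderiv l ⟨hl0, le_rfl⟩
      have hDl := hDpos l ⟨hl0, le_rfl⟩
      rw [hasDerivAt_iff_tendsto_slope] at hd
      have hev1 : ∀ᶠ y in nhdsWithin l {l}ᶜ, 0 < slope (fun x => gRev c f x l) l y :=
        hd.eventually (eventually_gt_nhds hDl)
      have hss : nhdsWithin l (Set.Ioi l) ≤ nhdsWithin l {l}ᶜ :=
        nhdsWithin_mono l (fun y hy => Set.mem_compl_singleton_iff.2 (ne_of_gt hy))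
      have hev2 : ∀ᶠ y in nhdsWithin l (Set.Ioi l), y < 1 :=
        (eventually_lt_nhds hl.2).filter_mono nhdsWithin_le_nhds
      obtain ⟨y, hy1, hy2, hy3⟩ :=
        ((hev1.filter_mono hss).and (hev2.and eventually_mem_nhdsWithin)).exists
      rw [slope_def_field] at hy1
      have hyl : l < y := hy3
      have hgy : gRev c f l l < gRev c f y l := by
        have h := mul_pos hy1 (sub_pos.2 hyl)
        rw [div_mul_cancel₀ _ (by linarith : y - l ≠ 0)] at h
        linarith
      have := hmax y ⟨by linarith [hl.1], hy2.le⟩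
      rw [heq] at this
      linarith
  · -- xstar < l
    have h := hmono ⟨hxs.1, hlt.le⟩ ⟨hl.1, le_rfl⟩ hlt
    have := hmax l ⟨hl.1, hl.2.le⟩
    simp only [] at h
    linarith

/-- For a continuous MHR density `f` on `[0,c]` and low CTR `l ∈ [0,1)`, every maximizer
`x*` of `g_f(·,l)` on `[0,1]` satisfies `x* > l`; in particular `g_f(·,l)` is strictly
increasing on `[0,l]`. -/
theorem optimal_signal_ratio_gt_l (c : ℝ) (hc : 0 < c) (f : ℝ → ℝ)
    (hf_cont : ContinuousOn f (Set.Icc 0 c))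
    (hf_nonneg : ∀ v ∈ Set.Icc (0 : ℝ) c, 0 ≤ f v)
    (hf_int : (∫ v in (0 : ℝ)..c, f v) = 1)
    (hMHR : ∀ v₁ ∈ Set.Icc (0 : ℝ) c, ∀ v₂ ∈ Set.Icc (0 : ℝ) c, v₁ ≤ v₂ →
      (∫ u in (0 : ℝ)..v₁, f u) < 1 → (∫ u in (0 : ℝ)..v₂, f u) < 1 →
      f v₁ / (1 - ∫ u in (0 : ℝ)..v₁, f u) ≤ f v₂ / (1 - ∫ u in (0 : ℝ)..v₂, f u))
    (l : ℝ) (hl : l ∈ Set.Ico (0 : ℝ) 1) :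
    (∀ xstar ∈ Set.Icc (0 : ℝ) 1,
        (∀ x ∈ Set.Icc (0 : ℝ) 1, gRev c f x l ≤ gRev c f xstar l) → l < xstar)
    ∧ StrictMonoOn (fun x => gRev c f x l) (Set.Icc 0 l) := by
  set g : ℝ → ℝ := fun v => f (max 0 (min v c)) with hgdef
  have hgeqIcc : ∀ v ∈ Set.Icc (0:ℝ) c, g v = f v := by
    intro v hv
    rw [hgdef]
    simp only []
    rw [min_eq_left hv.2, max_eq_right hv.1]
  have hgcont : Continuous g := by
    rw [hgdef]
    exact hf_cont.comp_continuous
      (continuous_const.max (continuous_id.min continuous_const))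
      (fun v => ⟨le_max_left _ _, max_le hc.le (min_le_right v c)⟩)
  have hgnn : ∀ v, 0 ≤ g v :=
    fun v => hf_nonneg _ ⟨le_max_left _ _, max_le hc.le (min_le_right v c)⟩
  have hFeq : ∀ t ∈ Set.Icc (0:ℝ) c, (∫ u in (0:ℝ)..t, g u) = ∫ u in (0:ℝ)..t, f u := by
    intro t ht
    apply intervalIntegral.integral_congr
    intro u hu
    rw [Set.uIcc_of_le ht.1] at hu
    exact hgeqIcc u ⟨hu.1, le_trans hu.2 ht.2⟩
  have hgint : (∫ v in (0:ℝ)..c, g v) = 1 := by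
    rw [hFeq c ⟨hc.le, le_rfl⟩]; exact hf_int
  have hgMHR : ∀ v₁ ∈ Set.Icc (0 : ℝ) c, ∀ v₂ ∈ Set.Icc (0 : ℝ) c, v₁ ≤ v₂ →
      (∫ u in (0 : ℝ)..v₁, g u) < 1 → (∫ u in (0 : ℝ)..v₂, g u) < 1 →
      g v₁ / (1 - ∫ u in (0 : ℝ)..v₁, g u) ≤ g v₂ / (1 - ∫ u in (0 : ℝ)..v₂, g u) := by
    intro v₁ h₁ v₂ h₂ h12 hF1 hF2
    rw [hFeq v₁ h₁] at hF1
    rw [hFeq v₂ h₂] at hF2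
    rw [hFeq v₁ h₁, hFeq v₂ h₂, hgeqIcc v₁ h₁, hgeqIcc v₂ h₂]
    exact hMHR v₁ h₁ v₂ h₂ h12 hF1 hF2
  have hgrev : ∀ x ∈ Set.Icc (0:ℝ) 1, gRev c f x l = gRev c g x l := by
    intro x hx
    rcases eq_or_lt_of_le hx.1 with h0 | h0
    · rw [← h0, gRev_zero, gRev_zero]
    · unfold gRev
      congr 1
      · apply intervalIntegral.integral_congr
        intro v hv
        rw [Set.uIcc_of_le hc.le] at hv
        have hvx0 : 0 ≤ v * x := mul_nonneg hv.1 hx.1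
        have hvxc : v * x ≤ c := le_trans (by nlinarith [hv.1, hx.2] : v * x ≤ v) hv.2
        have hin : (∫ u in (v*x)..c, f u) = ∫ u in (v*x)..c, g u := by
          apply intervalIntegral.integral_congr
          intro u hu
          rw [Set.uIcc_of_le hvxc] at hu
          exact (hgeqIcc u ⟨le_trans hvx0 hu.1, hu.2⟩).symm
        show v * x * (∫ u in (v*x)..c, f u) * f v = v * x * (∫ u in (v*x)..c, g u) * g v
        rw [hin, hgeqIcc v hv]
      · congr 1
        apply intervalIntegral.integral_congr
        intro v hv
        have hcx0 : 0 ≤ c * x := mul_nonneg hc.le hx.1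
        rw [Set.uIcc_of_le hcx0] at hv
        have hvc : v ≤ c := le_trans hv.2 (by nlinarith [hx.2, hc.le] : c * x ≤ c)
        have hvx : v / x ≤ c := by
          rw [div_le_iff₀ h0]
          calc v ≤ c * x := hv.2
          _ = x * c := mul_comm c x
          _ ≤ c * x := le_of_eq (mul_comm x c)
        have hvx0 : 0 ≤ v / x := div_nonneg hv.1 hx.1
        have hin : (∫ u in (v/x)..c, f u) = ∫ u in (v/x)..c, g u := by
          apply intervalIntegral.integral_congr
          intro u hu
          rw [Set.uIcc_of_le hvx] at hu
          exact (hgeqIcc u ⟨le_trans hvx0 hu.1, hu.2⟩).symm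
        show v / x * (∫ u in (v/x)..c, f u) * f v = v / x * (∫ u in (v/x)..c, g u) * g v
        rw [hin, hgeqIcc v ⟨hv.1, hvc⟩]
  obtain ⟨P1, P2⟩ := main_aux hc hgcont hgnn hgint hgMHR l hl
  constructor
  · intro xstar hxs hmax
    apply P1 xstar hxs
    intro x hx
    rw [← hgrev x hx, ← hgrev xstar hxs]
    exact hmax x hx
  · intro a ha b hb hab
    have ha' : a ∈ Set.Icc (0:ℝ) 1 := ⟨ha.1, le_trans ha.2 hl.2.le⟩
    have hb' : b ∈ Set.Icc (0:ℝ) 1 := ⟨hb.1, le_trans hb.2 hl.2.le⟩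
    show gRev c f a l < gRev c f b l
    rw [hgrev a ha', hgrev b hb']
    exact P2 ha hb hab
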